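/- Let theta in (0, pi) and define the eigenstates of the spikeless Hamiltonian in the symmetric subspace by <k|psi_t^{(n)}> = sqrt(C(n,t)/C(n,k)) * tan^{t+k}(theta/2) * cos^n(theta/2) * sum_{j=0}^{t} (-cot^2(theta/2))^j C(t,j) C(n-t, k-j). Define P_{n,k} = sqrt(C(n,k)) sin^k(theta/2) cos^{n-k}(theta/2). Then there is a nonzero constant c (independent of k) such that P_{n+1,k} <k|psi_{t+1}^{(n+1)}> = c * (P_{n,k} <k|psi_t^{(n)}> - P_{n,k-1} <k-1|psi_t^{(n)}>) for all k. -/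

import Mathlib

/-- The eigenstates of the spikeless Hamiltonian in the symmetric subspace:
⟨k|ψ_t^(n)⟩ = √(C(n,t)/C(n,k)) tan^(t+k)(θ/2) cos^n(θ/2)
  ∑_{j=0}^t (-cot²(θ/2))^j C(t,j) C(n-t, k-j),
with the convention C(a,b) = 0 for b < 0 or b > a. -/
noncomputable def psiT (θ : ℝ) (n t k : ℕ) : ℝ :=
  Real.sqrt ((n.choose t : ℝ) / (n.choose k : ℝ)) *
    (Real.tan (θ/2))^(t + k) * (Real.cos (θ/2))^n *
    ∑ j ∈ Finset.range (t + 1),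
      (-(Real.cos (θ/2) / Real.sin (θ/2))^2)^j * (t.choose j : ℝ) *
        (if j ≤ k then ((n - t).choose (k - j) : ℝ) else 0)

/-- P_{n,k} = √C(n,k) sin^k(θ/2) cos^(n-k)(θ/2). -/
noncomputable def Pcoef (θ : ℝ) (n k : ℕ) : ℝ :=
  Real.sqrt (n.choose k) * (Real.sin (θ/2))^k * (Real.cos (θ/2))^(n - k)

/-- Auxiliary polynomial part: coefficient of z^k in (1-z)^t (cos² + sin² z)^m. -/
noncomputable def gAux (θ : ℝ) (m t k : ℕ) : ℝ :=
  ∑ j ∈ Finset.range (t + 1),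
    (-1 : ℝ)^j * (t.choose j : ℝ) *
      (if j ≤ k then (m.choose (k - j) : ℝ) * ((Real.sin (θ/2))^2)^(k - j) *
        ((Real.cos (θ/2))^2)^(m - (k - j)) else 0)

lemma prodA (θ : ℝ) (hs : Real.sin (θ/2) ≠ 0) (hc : Real.cos (θ/2) ≠ 0)
    (t m k : ℕ) :
    Pcoef θ (t + m) k * psiT θ (t + m) t k
      = Real.sqrt ((t + m).choose t) *
          (Real.sin (θ/2) * Real.cos (θ/2))^t * gAux θ m t k := by
  by_cases hk : k ≤ t + m
  · have hpos : (0 : ℝ) < ((t + m).choose k : ℝ) := by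
      exact_mod_cast Nat.choose_pos hk
    have hsq : Real.sqrt (((t + m).choose t : ℝ))
        = Real.sqrt (((t + m).choose k : ℝ)) *
          Real.sqrt (((t + m).choose t : ℝ) / ((t + m).choose k : ℝ)) := by
      rw [← Real.sqrt_mul (by positivity), mul_div_cancel₀ _ (ne_of_gt hpos)]
    unfold Pcoef psiT gAux
    rw [Real.tan_eq_sin_div_cos, hsq]
    simp only [Nat.add_sub_cancel_left, Finset.mul_sum]
    apply Finset.sum_congr rfl
    intro j hj
    have hjt : j ≤ t := by
      have := Finset.mem_range.mp hj; omega
    by_cases hjk : j ≤ k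
    · simp only [if_pos hjk]
      by_cases hkm : k - j ≤ m
      · obtain ⟨u, rfl⟩ : ∃ u, t = j + u := ⟨t - j, by omega⟩
        obtain ⟨a, rfl⟩ : ∃ a, k = j + a := ⟨k - j, by omega⟩
        obtain ⟨b, rfl⟩ : ∃ b, m = a + b := ⟨m - a, by omega⟩
        rw [show j + a - j = a from by omega,
          show a + b - a = b from by omega,
          show j + u + (a + b) - (j + a) = u + b from by omega,
          neg_pow]
        simp only [div_pow, ← pow_mul, mul_pow]
        field_simp
        ring
      · have : m.choose (k - j) = 0 := Nat.choose_eq_zero_of_lt (by omega)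
        simp [this]
    · simp [hjk]
  · have h0 : ((t + m).choose k : ℝ) = 0 := by
      rw [Nat.choose_eq_zero_of_lt (by omega)]; norm_cast
    have hg : gAux θ m t k = 0 := by
      rw [gAux]
      apply Finset.sum_eq_zero
      intro j hj
      have hjt : j ≤ t := by
        have := Finset.mem_range.mp hj; omega
      by_cases hjk : j ≤ k
      · have : m.choose (k - j) = 0 := Nat.choose_eq_zero_of_lt (by omega)
        simp [this, hjk]
      · simp [hjk]
    rw [hg, Pcoef, h0]
    simp

open Finset in
lemma sum_choose_succ (t : ℕ) (T : ℕ → ℝ) :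
    ∑ j ∈ range (t + 2), (-1 : ℝ)^j * ((t+1).choose j : ℝ) * T j
      = (∑ j ∈ range (t + 1), (-1 : ℝ)^j * (t.choose j : ℝ) * T j)
        - ∑ i ∈ range (t + 1), (-1 : ℝ)^i * (t.choose i : ℝ) * T (i + 1) := by
  have e1 := Finset.sum_range_succ' (fun j => (-1 : ℝ)^j * ((t+1).choose j : ℝ) * T j) (t + 1)
  have e2 := Finset.sum_range_succ' (fun j => (-1 : ℝ)^j * (t.choose j : ℝ) * T j) (t + 1)
  have e3 := Finset.sum_range_succ (fun j => (-1 : ℝ)^j * (t.choose j : ℝ) * T j) (t + 1)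
  have hz : t.choose (t + 1) = 0 := Nat.choose_eq_zero_of_lt (by omega)
  have split : ∀ i ∈ range (t + 1),
      (-1 : ℝ)^(i+1) * ((t+1).choose (i+1) : ℝ) * T (i+1)
        = (-1 : ℝ)^(i+1) * (t.choose (i+1) : ℝ) * T (i+1)
          + (-((-1 : ℝ)^i * (t.choose i : ℝ) * T (i+1))) := by
    intro i hi
    rw [Nat.choose_succ_succ]
    push_cast
    ring
  rw [e1, Finset.sum_congr rfl split, Finset.sum_add_distrib]
  rw [show (∑ i ∈ range (t+1), -((-1 : ℝ)^i * (t.choose i : ℝ) * T (i+1)))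
      = -∑ i ∈ range (t+1), (-1 : ℝ)^i * (t.choose i : ℝ) * T (i+1) from
    by rw [Finset.sum_neg_distrib]]
  have e4 : (∑ i ∈ range (t+1), (-1 : ℝ)^(i+1) * (t.choose (i+1) : ℝ) * T (i+1))
      + (-1 : ℝ)^0 * ((t+1).choose 0 : ℝ) * T 0
      = ∑ j ∈ range (t + 1), (-1 : ℝ)^j * (t.choose j : ℝ) * T j := by
    have : (∑ i ∈ range (t+1), (-1 : ℝ)^(i+1) * (t.choose (i+1) : ℝ) * T (i+1))
        + (-1 : ℝ)^0 * (t.choose 0 : ℝ) * T 0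
        = ∑ j ∈ range (t + 2), (-1 : ℝ)^j * (t.choose j : ℝ) * T j := (e2).symm
    rw [e3] at this
    simp only [Nat.choose_zero_right, Nat.choose_self, hz] at this ⊢
    push_cast at this ⊢
    linarith
  linarith [e4]

lemma gAux_succ (θ : ℝ) (m t k : ℕ) :
    gAux θ m (t + 1) k
      = gAux θ m t k - (if 1 ≤ k then gAux θ m t (k - 1) else 0) := by
  have h := sum_choose_succ t (fun j =>
    if j ≤ k then (m.choose (k - j) : ℝ) * ((Real.sin (θ/2))^2)^(k - j) *
      ((Real.cos (θ/2))^2)^(m - (k - j)) else 0)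
  rw [gAux, gAux]
  rw [show t + 1 + 1 = t + 2 from rfl, h]
  congr 1
  by_cases hk : 1 ≤ k
  · rw [if_pos hk, gAux]
    apply Finset.sum_congr rfl
    intro i hi
    by_cases hik : i + 1 ≤ k
    · rw [if_pos hik, if_pos (show i ≤ k - 1 from by omega),
        show k - (i + 1) = k - 1 - i from by omega]
    · rw [if_neg hik, if_neg (show ¬ i ≤ k - 1 from by omega)]
  · rw [if_neg hk]
    apply Finset.sum_eq_zero
    intro i hi
    rw [if_neg (show ¬ i + 1 ≤ k from by omega), mul_zero]

/-- Recurrence relating consecutive excited states of the spikeless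
Hamiltonian: P_{n+1,k}⟨k|ψ_{t+1}^(n+1)⟩ is proportional (with a nonzero
constant independent of k) to P_{n,k}⟨k|ψ_t^(n)⟩ - P_{n,k-1}⟨k-1|ψ_t^(n)⟩
(with the k = 0 case having no second term). -/
theorem psiT_recurrence (θ : ℝ) (hθ0 : 0 < θ) (hθπ : θ < Real.pi)
    (n t : ℕ) (hn : 1 ≤ n) (htn : t ≤ n) :
    ∃ c : ℝ, c ≠ 0 ∧
      Pcoef θ (n + 1) 0 * psiT θ (n + 1) (t + 1) 0 = c * (Pcoef θ n 0 * psiT θ n t 0) ∧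
      ∀ k : ℕ, 1 ≤ k →
        Pcoef θ (n + 1) k * psiT θ (n + 1) (t + 1) k
          = c * (Pcoef θ n k * psiT θ n t k - Pcoef θ n (k - 1) * psiT θ n t (k - 1)) := by
  have hπ := Real.pi_pos
  have hs : 0 < Real.sin (θ/2) :=
    Real.sin_pos_of_pos_of_lt_pi (by linarith) (by linarith)
  have hc : 0 < Real.cos (θ/2) :=
    Real.cos_pos_of_mem_Ioo ⟨by linarith, by linarith⟩
  obtain ⟨m, rfl⟩ : ∃ m, n = t + m := ⟨n - t, by omega⟩
  have hCt : (0 : ℝ) < ((t + m).choose t : ℝ) := by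
    exact_mod_cast Nat.choose_pos (by omega)
  have hCt' : (0 : ℝ) < (((t + 1) + m).choose (t + 1) : ℝ) := by
    exact_mod_cast Nat.choose_pos (by omega)
  refine ⟨Real.sqrt ((((t + 1) + m).choose (t + 1) : ℝ) / ((t + m).choose t : ℝ)) *
      (Real.sin (θ/2) * Real.cos (θ/2)), ?_, ?_, ?_⟩
  · have h1 : (0 : ℝ) <
        Real.sqrt ((((t + 1) + m).choose (t + 1) : ℝ) / ((t + m).choose t : ℝ)) :=
      Real.sqrt_pos.mpr (div_pos hCt' hCt)
    positivity
  · rw [show t + m + 1 = (t + 1) + m from by omega,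
      prodA θ (ne_of_gt hs) (ne_of_gt hc) (t + 1) m 0,
      prodA θ (ne_of_gt hs) (ne_of_gt hc) t m 0,
      gAux_succ θ m t 0, if_neg (by omega)]
    rw [show Real.sqrt ((((t + 1) + m).choose (t + 1) : ℝ))
        = Real.sqrt ((((t + 1) + m).choose (t + 1) : ℝ) / ((t + m).choose t : ℝ)) *
          Real.sqrt (((t + m).choose t : ℝ)) from by
      rw [← Real.sqrt_mul (by positivity), div_mul_cancel₀ _ (ne_of_gt hCt)]]
    ring
  · intro k hk
    rw [show t + m + 1 = (t + 1) + m from by omega,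
      prodA θ (ne_of_gt hs) (ne_of_gt hc) (t + 1) m k,
      prodA θ (ne_of_gt hs) (ne_of_gt hc) t m k,
      prodA θ (ne_of_gt hs) (ne_of_gt hc) t m (k - 1),
      gAux_succ θ m t k, if_pos hk]
    rw [show Real.sqrt ((((t + 1) + m).choose (t + 1) : ℝ))
        = Real.sqrt ((((t + 1) + m).choose (t + 1) : ℝ) / ((t + m).choose t : ℝ)) *
          Real.sqrt (((t + m).choose t : ℝ)) from by
      rw [← Real.sqrt_mul (by positivity), div_mul_cancel₀ _ (ne_of_gt hCt)]]
    ring
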